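/- In a finite orthomodular poset, for all elements a, b the set Min U(a, b') is nonempty and for every m in Min U(a, b') the meet m ∧ b exists; dually, Max L(a, b) is nonempty and for every m in Max L(a, b) the join a' ∨ m exists. -/

import Mathlib

section
variable (A : Type*)

/-- Set of minimal upper bounds. -/
def MinU [PartialOrder A] (S : Set A) : Set A := {a | Minimal (· ∈ upperBounds S) a}

/-- Set of maximal lower bounds. -/
def MaxL [PartialOrder A] (S : Set A) : Set A := {a | Maximal (· ∈ lowerBounds S) a}

/-- An orthomodular poset: a bounded poset with an antitone involution that is a
complementation, such that orthogonal elements have a join and the orthomodular law holds. -/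
structure OMP [PartialOrder A] [BoundedOrder A] where
  compl : A → A
  compl_antitone : ∀ a b : A, a ≤ b → compl b ≤ compl a
  compl_involutive : ∀ a : A, compl (compl a) = a
  sup_compl : ∀ a : A, IsLUB {a, compl a} ⊤
  inf_compl : ∀ a : A, IsGLB {a, compl a} ⊥
  ortho_sup : ∀ a b : A, a ≤ compl b → ∃ c, IsLUB {a, b} c
  oml : ∀ a b m : A, a ≤ b → IsGLB {b, compl a} m → IsLUB {a, m} b

end

/-- De Morgan: complement of a LUB of complements is a GLB. -/
lemma lub_compl_to_glb {A : Type*} [PartialOrder A] [BoundedOrder A] (M : OMP A)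
    (x y c : A) (h : IsLUB {M.compl x, M.compl y} c) : IsGLB {x, y} (M.compl c) := by
  constructor
  · rintro z (rfl | rfl)
    · have := h.1 (Set.mem_insert _ _)
      have := M.compl_antitone _ _ this
      rwa [M.compl_involutive] at this
    · have := h.1 (Set.mem_insert_of_mem _ rfl)
      have := M.compl_antitone _ _ this
      rwa [M.compl_involutive] at this
  · intro d hd
    have hdx := hd (Set.mem_insert _ _)
    have hdy := hd (Set.mem_insert_of_mem _ rfl)
    have : c ≤ M.compl d := by
      apply h.2
      rintro z (rfl | rfl)
      · exact M.compl_antitone _ _ hdx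
      · exact M.compl_antitone _ _ hdy
    have := M.compl_antitone _ _ this
    rwa [M.compl_involutive] at this

/-- In a finite orthomodular poset, `Min U(a, b')` is nonempty and for each of its members `m`
the meet `m ∧ b` exists; dually `Max L(a, b)` is nonempty and for each of its members `m` the
join `a' ∨ m` exists. -/
theorem stmt_2 {A : Type*} [PartialOrder A] [BoundedOrder A] [Finite A] (M : OMP A)
    (a b : A) :
    (MinU A {a, M.compl b}).Nonempty ∧
    (∀ m ∈ MinU A {a, M.compl b}, ∃ x, IsGLB {m, b} x) ∧
    (MaxL A {a, b}).Nonempty ∧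
    (∀ m ∈ MaxL A {a, b}, ∃ x, IsLUB {M.compl a, m} x) := by
  refine ⟨?_, ?_, ?_, ?_⟩
  · have htop : (⊤ : A) ∈ upperBounds {a, M.compl b} := fun z _ => le_top
    obtain ⟨m, _, hm⟩ := Finite.exists_le_minimal htop
    exact ⟨m, hm⟩
  · intro m hm
    have hb'm : M.compl b ≤ m := hm.1 (Set.mem_insert_of_mem _ rfl)
    have h1 : M.compl b ≤ M.compl (M.compl m) := by rwa [M.compl_involutive]
    obtain ⟨c, hc⟩ := M.ortho_sup (M.compl b) (M.compl m) h1
    rw [Set.pair_comm] at hc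
    exact ⟨M.compl c, lub_compl_to_glb M m b c hc⟩
  · have hbot : (⊥ : A) ∈ lowerBounds {a, b} := fun z _ => bot_le
    obtain ⟨m, _, hm⟩ := Finite.exists_le_maximal hbot
    exact ⟨m, hm⟩
  · intro m hm
    have hma : m ≤ a := hm.1 (Set.mem_insert _ _)
    have h1 : m ≤ M.compl (M.compl a) := by rwa [M.compl_involutive]
    obtain ⟨c, hc⟩ := M.ortho_sup m (M.compl a) h1
    rw [Set.pair_comm] at hc
    exact ⟨c, hc⟩
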